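/- Let α, γ, C, K > 0 with KC > γ. Let v : (0,∞) → [0,∞) be nonincreasing, suppose that ∫_x^∞ t^{−γ/α−1} v(t) dt < ∞ for every x > 0, and suppose that v(x) ≤ (KC/α)·x^{γ/α}·∫_x^∞ t^{−γ/α−1} v(t) dt for all x ∈ (0, α]. Then there exists a constant C' > 0 such that v(x) ≤ C'·x^{(γ−CK)/α} for all x ∈ (0, α]. -/

import Mathlib

open MeasureTheory Set

/-- A Gronwall-type estimate: if `v : (0,∞) → [0,∞)` is
nonincreasing, `t^{−γ/α−1}·v(t)` is integrable on `(x,∞)` for every `x > 0`,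
and `v(x) ≤ (KC/α)·x^{γ/α}·∫_x^∞ t^{−γ/α−1} v(t) dt` for all `x ∈ (0,α]`,
then `v(x) ≤ C'·x^{(γ−CK)/α}` on `(0,α]` for some constant `C' > 0`. -/
theorem gronwall_type_bound (α γ C K : ℝ)
    (hα : 0 < α) (hγ : 0 < γ) (hC : 0 < C) (hK : 0 < K) (hKC : γ < K * C)
    (v : ℝ → ℝ)
    (hv_nonneg : ∀ x ∈ Set.Ioi (0 : ℝ), 0 ≤ v x)
    (hv_mono : AntitoneOn v (Set.Ioi (0 : ℝ)))
    (hv_int : ∀ x ∈ Set.Ioi (0 : ℝ),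
      IntegrableOn (fun t => t ^ (-(γ / α) - 1) * v t) (Set.Ioi x))
    (hineq : ∀ x ∈ Set.Ioc (0 : ℝ) α,
      v x ≤ (K * C / α) * x ^ (γ / α) *
        ∫ t in Set.Ioi x, t ^ (-(γ / α) - 1) * v t) :
    ∃ C' : ℝ, 0 < C' ∧ ∀ x ∈ Set.Ioc (0 : ℝ) α,
      v x ≤ C' * x ^ ((γ - C * K) / α) := by
  set e : ℝ := -(γ / α) - 1 with he
  set δ : ℝ := K * C / α with hδ
  have hδpos : 0 < δ := div_pos (mul_pos hK hC) hα
  set f : ℝ → ℝ := fun t => t ^ e * v t with hf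
  have hfnn : ∀ t ∈ Ioi (0 : ℝ), 0 ≤ f t := fun t ht =>
    mul_nonneg (Real.rpow_nonneg (le_of_lt ht) e) (hv_nonneg t ht)
  set Fα : ℝ := ∫ t in Ioi α, f t with hFα_def
  have hFα : 0 ≤ Fα :=
    setIntegral_nonneg measurableSet_Ioi (fun t ht => hfnn t (lt_trans hα ht))
  have hαδ : (0 : ℝ) < α ^ δ := Real.rpow_pos_of_pos hα δ
  refine ⟨δ * α ^ δ * Fα + 1, ?_, ?_⟩
  · have : 0 ≤ δ * α ^ δ * Fα := mul_nonneg (mul_nonneg hδpos.le hαδ.le) hFα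
    linarith
  intro x hx
  obtain ⟨hx0, hxα⟩ := hx
  set c : ℝ := x / 2 with hc
  have hc0 : 0 < c := by positivity
  have hcx : c < x := by rw [hc]; linarith
  -- The right-continuous modification of `v` (from the right) via the antitone structure.
  set m : ℝ → ℝ := fun t => -v (max t c) with hm_def
  have hm : Monotone m := by
    intro s t hst
    have hs : max s c ∈ Ioi (0 : ℝ) := lt_of_lt_of_le hc0 (le_max_right _ _)
    have ht : max t c ∈ Ioi (0 : ℝ) := lt_of_lt_of_le hc0 (le_max_right _ _)
    simp only [hm_def, neg_le_neg_iff]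
    exact hv_mono hs ht (max_le_max hst le_rfl)
  set wr : ℝ → ℝ := fun t => -Function.rightLim m t with hwr_def
  have hwr_anti : Antitone wr := fun a b hab => neg_le_neg (hm.rightLim hab)
  have hwr_rc : ∀ y : ℝ, ContinuousWithinAt wr (Ici y) y := by
    intro y
    have h1 : ContinuousWithinAt (Function.rightLim m) (Ici y) y :=
      hm.stieltjesFunction.right_continuous y
    exact h1.neg
  have hwr_le : ∀ y : ℝ, wr y ≤ v (max y c) := by
    intro y
    have := hm.le_rightLim (le_refl y)
    simp only [hwr_def]
    simp only [hm_def] at this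
    linarith
  have hwr_nonneg : ∀ y : ℝ, 0 ≤ wr y := by
    intro y
    have h1 : Function.rightLim m y ≤ m (y + 1) := hm.rightLim_le (lt_add_one y)
    have h2 : m (y + 1) ≤ 0 := by
      simp only [hm_def, neg_nonpos]
      exact hv_nonneg _ (lt_of_lt_of_le hc0 (le_max_right _ _))
    simp only [hwr_def]
    linarith
  set g : ℝ → ℝ := fun t => t ^ e * wr t with hg_def
  -- f and g agree a.e. on (c, ∞)
  have hae : f =ᵐ[volume.restrict (Ioi c)] g := by
    have hD : Set.Countable {t | ¬ContinuousAt m t} := hm.countable_not_continuousAt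
    have h0 : ∀ᵐ t ∂(volume : Measure ℝ), t ∉ {t | ¬ContinuousAt m t} := by
      rw [ae_iff]
      simpa using hD.measure_zero volume
    filter_upwards [ae_restrict_mem measurableSet_Ioi, ae_restrict_of_ae h0] with t ht hDt
    have hct : ContinuousAt m t := not_not.1 hDt
    have hr : Function.rightLim m t = m t :=
      hm.continuousWithinAt_Ioi_iff_rightLim_eq.1 hct.continuousWithinAt
    have hmax : max t c = t := max_eq_left (le_of_lt ht)
    simp only [hf, hg_def, hwr_def, hr]
    simp only [hm_def, hmax, neg_neg]
  have hcmem : c ∈ Ioi (0 : ℝ) := hc0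
  have hg_int : IntegrableOn g (Ioi c) := (hv_int c hcmem).congr hae
  -- splitting identity: for x ≤ y ≤ α, Fα + ∫_y^α g = ∫_{Ioi y} f
  have hFP : ∀ y : ℝ, x ≤ y → y ≤ α →
      Fα + (∫ t in y..α, g t) = ∫ t in Ioi y, f t := by
    intro y hxy hyα
    have hcy : c < y := lt_of_lt_of_le hcx hxy
    have hsub : Ioc y α ⊆ Ioi c := fun t ht => lt_trans hcy ht.1
    have hfIoc : IntegrableOn f (Ioc y α) := (hv_int c hcmem).mono_set hsub
    have hfIoiα : IntegrableOn f (Ioi α) := hv_int α hα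
    have hsplit : (∫ t in Ioc y α, f t) + (∫ t in Ioi α, f t) = ∫ t in Ioi y, f t := by
      rw [← setIntegral_union (Ioc_disjoint_Ioi le_rfl) measurableSet_Ioi hfIoc hfIoiα,
        Ioc_union_Ioi_eq_Ioi hyα]
    have hcongr : (∫ t in Ioc y α, g t) = ∫ t in Ioc y α, f t :=
      integral_congr_ae (Filter.EventuallyEq.symm (ae_restrict_of_ae_restrict_of_subset hsub hae))
    rw [intervalIntegral.integral_of_le hyα, hcongr]
    rw [← hsplit, hFα_def]
    ring
  -- continuity of the primitive
  have hIccIoi : Icc x α ⊆ Ioi c := fun t ht => lt_of_lt_of_le hcx ht.1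
  set P : ℝ → ℝ := fun y => ∫ t in y..α, g t with hP_def
  have hPcont : ContinuousOn P (Icc x α) := by
    have h1 : IntegrableOn g (uIcc x α) := by
      rw [uIcc_of_le hxα]
      exact hg_int.mono_set hIccIoi
    have := intervalIntegral.continuousOn_primitive_interval_left h1
    rwa [uIcc_of_le hxα] at this
  set Φ : ℝ → ℝ := fun y => y ^ δ * (Fα + P y) - x ^ δ * (Fα + P x) with hΦ_def
  have hΦcont : ContinuousOn Φ (Icc x α) := by
    apply ContinuousOn.sub _ continuousOn_const
    apply ContinuousOn.mul _ (continuousOn_const.add hPcont)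
    intro y hy
    exact (Real.continuousAt_rpow_const y δ
      (Or.inl (ne_of_gt (lt_of_lt_of_le hx0 hy.1)))).continuousWithinAt
  set Φ' : ℝ → ℝ := fun y => δ * y ^ (δ - 1) * (Fα + P y) + y ^ δ * (-g y) with hΦ'_def
  have hΦderiv : ∀ y ∈ Ico x α, HasDerivWithinAt Φ (Φ' y) (Ici y) y := by
    intro y hy
    have hy0 : 0 < y := lt_of_lt_of_le hx0 hy.1
    have hcy : c < y := lt_of_lt_of_le hcx hy.1
    have hIg : IntervalIntegrable g volume y α := by
      rw [intervalIntegrable_iff_integrableOn_Ioc_of_le hy.2.le]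
      exact hg_int.mono_set (fun t ht => lt_trans hcy ht.1)
    have hmeas : StronglyMeasurableAtFilter g (nhdsWithin y (Ioi y)) volume :=
      ⟨Ioi c, mem_nhdsWithin_of_mem_nhds (Ioi_mem_nhds hcy), hg_int.aestronglyMeasurable⟩
    have hgc : ContinuousWithinAt g (Ioi y) y := by
      apply ContinuousWithinAt.mul
      · exact (Real.continuousAt_rpow_const y e (Or.inl hy0.ne')).continuousWithinAt
      · exact (hwr_rc y).mono Ioi_subset_Ici_self
    have hP' : HasDerivWithinAt P (-g y) (Ici y) y :=
      intervalIntegral.integral_hasDerivWithinAt_left hIg hmeas hgc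
    have hpow : HasDerivWithinAt (fun u : ℝ => u ^ δ) (δ * y ^ (δ - 1)) (Ici y) y :=
      (Real.hasDerivAt_rpow_const (Or.inl hy0.ne')).hasDerivWithinAt
    have hsum : HasDerivWithinAt (fun u => Fα + P u) (-g y) (Ici y) y := hP'.const_add Fα
    have := (hpow.mul hsum).sub_const (x ^ δ * (Fα + P x))
    exact this
  have hbound : ∀ y ∈ Ico x α, ‖(0 : ℝ)‖ ≤ Φ' y := by
    intro y hy
    have hy0 : 0 < y := lt_of_lt_of_le hx0 hy.1
    have hFy : Fα + P y = ∫ t in Ioi y, f t := hFP y hy.1 hy.2.le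
    have hvy : v y ≤ δ * y ^ (γ / α) * ∫ t in Ioi y, f t := hineq y ⟨hy0, hy.2.le⟩
    have hmax : max y c = y := max_eq_left (le_of_lt (lt_of_lt_of_le hcx hy.1))
    have hwr_v : wr y ≤ v y := by
      have := hwr_le y
      rwa [hmax] at this
    have hye : (0 : ℝ) < y ^ e := Real.rpow_pos_of_pos hy0 e
    have hyδ : (0 : ℝ) < y ^ δ := Real.rpow_pos_of_pos hy0 δ
    have hexp : y ^ δ * y ^ e * y ^ (γ / α) = y ^ (δ - 1) := by
      rw [← Real.rpow_add hy0, ← Real.rpow_add hy0]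
      congr 1
      rw [he]
      ring
    have h2 : y ^ δ * g y ≤ δ * y ^ (δ - 1) * ∫ t in Ioi y, f t := by
      have step1 : y ^ δ * g y = y ^ δ * y ^ e * wr y := by
        simp only [hg_def]; ring
      have step2 : y ^ δ * y ^ e * wr y ≤ y ^ δ * y ^ e *
          (δ * y ^ (γ / α) * ∫ t in Ioi y, f t) := by
        apply mul_le_mul_of_nonneg_left (le_trans hwr_v hvy)
        positivity
      calc y ^ δ * g y = y ^ δ * y ^ e * wr y := step1
        _ ≤ y ^ δ * y ^ e * (δ * y ^ (γ / α) * ∫ t in Ioi y, f t) := step2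
        _ = δ * (y ^ δ * y ^ e * y ^ (γ / α)) * ∫ t in Ioi y, f t := by ring
        _ = δ * y ^ (δ - 1) * ∫ t in Ioi y, f t := by rw [hexp]
    simp only [norm_zero, hΦ'_def, hFy]
    nlinarith [h2]
  have key : ∀ z ∈ Icc x α, ‖(0 : ℝ)‖ ≤ Φ z := by
    intro z hz
    refine image_norm_le_of_norm_deriv_right_le_deriv_boundary'
      (f := fun _ : ℝ => (0 : ℝ)) (f' := fun _ : ℝ => (0 : ℝ))
      continuousOn_const (fun y _ => hasDerivWithinAt_const y (Ici y) 0)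
      ?_ hΦcont hΦderiv hbound hz
    simp [hΦ_def]
  -- conclusion
  have hΦα := key α ⟨hxα, le_rfl⟩
  have hPα : P α = 0 := intervalIntegral.integral_same
  have hFx : Fα + P x = ∫ t in Ioi x, f t := hFP x le_rfl hxα
  have hmain : x ^ δ * ∫ t in Ioi x, f t ≤ α ^ δ * Fα := by
    simp only [norm_zero, hΦ_def, hPα, add_zero, hFx] at hΦα
    linarith
  have hvx : v x ≤ δ * x ^ (γ / α) * ∫ t in Ioi x, f t := hineq x ⟨hx0, hxα⟩
  have hxδ : (0 : ℝ) < x ^ δ := Real.rpow_pos_of_pos hx0 δ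
  have hxγ : (0 : ℝ) < x ^ (γ / α) := Real.rpow_pos_of_pos hx0 (γ / α)
  have hexp2 : x ^ (γ / α) / x ^ δ = x ^ ((γ - C * K) / α) := by
    rw [← Real.rpow_sub hx0]
    congr 1
    rw [hδ]
    field_simp
  have hxt : (0 : ℝ) < x ^ ((γ - C * K) / α) := Real.rpow_pos_of_pos hx0 _
  have hFxle : (∫ t in Ioi x, f t) ≤ α ^ δ * Fα / x ^ δ := by
    rw [le_div_iff₀ hxδ]
    nlinarith [hmain]
  calc v x ≤ δ * x ^ (γ / α) * ∫ t in Ioi x, f t := hvx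
    _ ≤ δ * x ^ (γ / α) * (α ^ δ * Fα / x ^ δ) := by
        apply mul_le_mul_of_nonneg_left hFxle
        positivity
    _ = δ * α ^ δ * Fα * (x ^ (γ / α) / x ^ δ) := by ring
    _ = δ * α ^ δ * Fα * x ^ ((γ - C * K) / α) := by rw [hexp2]
    _ ≤ (δ * α ^ δ * Fα + 1) * x ^ ((γ - C * K) / α) := by nlinarith [hxt]
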